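/- Let n ≥ 1. Let 𝔉_n¹ be the quotient of 𝔉̃_n¹ := {(k_0,k,m) ∈ ℤ × ℤⁿ × ℕ̄ⁿ : k + m ∈ ℕ̄ⁿ, and if i_1 := ε(m) ≤ n then k_0 + Σ_{i=1}^{i_1} k_i = 0 and k_j = 0 for all i_1 < j ≤ n} (subspace topology of ℤ × ℤⁿ × ℕ̄ⁿ, ℤ discrete) by the relation (k_0,k,m) ∼ (k_0',k',m') iff k_0 = k_0', k = k' and (m,m') ∈ R_∞, with the quotient topology. Let F¹ := {(k_0,κ,μ) ∈ ℤ × ℤⁿ × ℕ̄ⁿ_↗ : κ + μ ∈ ℕ̄ⁿ_↗, and if i_1 := ε(μ) ≤ n then κ_j = −k_0 for all i_1 ≤ j ≤ n}, with the subspace topology. Then the map [(k_0,k,m)] ↦ (k_0, f(k), f(m)), where f is the partial-sums map f(k) = (k_1, k_1+k_2, …, k_1+⋯+k_n), is a well-defined homeomorphism from 𝔉_n¹ onto F¹ that preserves the groupoid structure: it sends units (0,0,[m]) to units (0,0,f(m)) and satisfies Φ([(k_0',k',k+m)]·[(k_0,k,m)]) = Φ([(k_0',k',k+m)])·Φ([(k_0,k,m)]),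 where composition on both sides is (k_0',κ',κ+μ)·(k_0,κ,μ) = (k_0+k_0', κ+κ', μ). -/

import Mathlib

/-! Tuples in `ℕ̄ⁿ = (ℕ∞)ⁿ` (here `Fin n → ℕ∞`), their anchor and index (`0`-based: the
paper's `ε(m)` resp. `ι(m)`, with values in `{1, …, n+1}`, equals `anchor n m + 1` resp.
`indexv n m + 1`), partial sums, and the equivalence relation `R_∞`. -/

/-- The (`0`-based) *anchor* of `m ∈ ℕ̄ⁿ`: the least `i` with `m i = ⊤`, and `n` if there is
no such `i` (the convention `m_{n+1} := +∞` of the paper). -/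
noncomputable def anchor (n : ℕ) (m : Fin n → ℕ∞) : ℕ :=
  sInf {i : ℕ | n ≤ i ∨ ∃ h : i < n, m ⟨i, h⟩ = ⊤}

/-- The (`0`-based) *index* of `m ∈ ℕ̄ⁿ`: the least `i` with `m i ≠ 0`, and `n` if there is
no such `i` (the convention `m_{n+1} := +∞` of the paper). -/
noncomputable def indexv (n : ℕ) (m : Fin n → ℕ∞) : ℕ :=
  sInf {i : ℕ | n ≤ i ∨ ∃ h : i < n, m ⟨i, h⟩ ≠ 0}

/-- The partial-sums map `ℕ̄ⁿ → ℕ̄ⁿ`, `m ↦ (m₁, m₁+m₂, …, m₁+⋯+m_n)` (`+∞` absorbing). -/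
def psumE {n : ℕ} (m : Fin n → ℕ∞) : Fin n → ℕ∞ :=
  fun i => ∑ j ∈ Finset.Iic i, m j

/-- The partial-sums map `ℤⁿ → ℤⁿ`, `k ↦ (k₁, k₁+k₂, …, k₁+⋯+k_n)`. -/
def psumZ {n : ℕ} (k : Fin n → ℤ) : Fin n → ℤ :=
  fun i => ∑ j ∈ Finset.Iic i, k j

/-- The equivalence relation `R_∞` on `ℕ̄ⁿ`: `(m, m') ∈ R_∞` iff `ε(m) = ε(m')` and
`mᵢ = m'ᵢ` for all `i < ε(m)`. -/
def Rinf (n : ℕ) (m m' : Fin n → ℕ∞) : Prop :=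
  anchor n m = anchor n m' ∧ ∀ i : Fin n, (i : ℕ) < anchor n m → m i = m' i

/-- The sum `k + m ∈ ℕ̄` of `k : ℤ` and `m : ℕ̄` (with `k + ∞ = ∞`; for finite `m` the value
is clamped to `0` when `m + k < 0`, which is immaterial under the condition `m + k ≥ 0`). -/
def addZE (k : ℤ) (m : ℕ∞) : ℕ∞ :=
  if m = ⊤ then ⊤ else ((((m.toNat : ℤ) + k).toNat : ℕ) : ℕ∞)

/-- The componentwise sum `k + m ∈ ℕ̄ⁿ` of `k : ℤⁿ` and `m : ℕ̄ⁿ`. -/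
def addZv {n : ℕ} (k : Fin n → ℤ) (m : Fin n → ℕ∞) : Fin n → ℕ∞ :=
  fun i => addZE (k i) (m i)

/-- The condition `k + m ∈ ℕ̄ⁿ`: every component of the sum is `+∞` or a nonnegative
integer. -/
def okAdd {n : ℕ} (k : Fin n → ℤ) (m : Fin n → ℕ∞) : Prop :=
  ∀ i : Fin n, m i = ⊤ ∨ 0 ≤ ((m i).toNat : ℤ) + k i

/-- Membership in Sheu's groupoid `𝔉̃ₙ¹ ⊆ ℤ × ℤⁿ × ℕ̄ⁿ`: `k + m ∈ ℕ̄ⁿ` and, whenever the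
(paper, `1`-based) anchor `ε(m) = anchor n m + 1` is `≤ n` (i.e. `anchor n m < n`),
`k₀ + ∑_{i=1}^{ε(m)} kᵢ = 0` and `k_j = 0` for all `ε(m) < j ≤ n`. -/
def sphCond (n : ℕ) (k0 : ℤ) (k : Fin n → ℤ) (m : Fin n → ℕ∞) : Prop :=
  okAdd k m ∧ (anchor n m < n →
    (k0 + ∑ i : Fin n, (if (i : ℕ) ≤ anchor n m then k i else 0) = 0) ∧
    ∀ j : Fin n, anchor n m < (j : ℕ) → k j = 0)

/-- The elements of Sheu's groupoid `𝔉̃ₙ¹`, as a subspace of `ℤ × ℤⁿ × ℕ̄ⁿ`. -/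
abbrev SphF (n : ℕ) := {p : ℤ × (Fin n → ℤ) × (Fin n → ℕ∞) // sphCond n p.1 p.2.1 p.2.2}

/-- The setoid on `𝔉̃ₙ¹` identifying `(k₀,k,m)` and `(k₀',k',m')` iff `k₀ = k₀'`, `k = k'`
and `(m,m') ∈ R_∞`; the quotient `𝔉ₙ¹ = 𝔉̃ₙ¹/∼` carries the quotient topology. -/
def sphSetoid (n : ℕ) : Setoid (SphF n) where
  r p q := p.1.1 = q.1.1 ∧ p.1.2.1 = q.1.2.1 ∧ Rinf n p.1.2.2 q.1.2.2
  iseqv := by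
    constructor
    · exact fun p => ⟨rfl, rfl, rfl, fun _ _ => rfl⟩
    · intro p q h
      refine ⟨h.1.symm, h.2.1.symm, h.2.2.1.symm, fun i hi => ?_⟩
      rw [← h.2.2.1] at hi
      exact (h.2.2.2 i hi).symm
    · intro a b c h1 h2
      refine ⟨h1.1.trans h2.1, h1.2.1.trans h2.2.1, h1.2.2.1.trans h2.2.2.1, fun i hi => ?_⟩
      refine (h1.2.2.2 i hi).trans (h2.2.2.2 i ?_)
      rwa [← h1.2.2.1]

/-- The groupoid `ℱ¹ ⊆ ℤ × ℤⁿ × ℕ̄ⁿ_↗` of Definition 6.3: `μ` increasing, `κ + μ ∈ ℕ̄ⁿ_↗`,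
and `κ_j = -k₀` for all `ε(μ) ≤ j ≤ n` whenever `ε(μ) ≤ n`. -/
def FBig (n : ℕ) : Set (ℤ × (Fin n → ℤ) × (Fin n → ℕ∞)) :=
  {p | Monotone p.2.2 ∧ okAdd p.2.1 p.2.2 ∧ Monotone (addZv p.2.1 p.2.2) ∧
    (anchor n p.2.2 < n → ∀ j : Fin n, anchor n p.2.2 ≤ (j : ℕ) → p.2.1 j = -p.1)}
section Aux
variable {n : ℕ}

lemma anchor_le (m : Fin n → ℕ∞) : anchor n m ≤ n :=
  Nat.sInf_le (Or.inl le_rfl)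

lemma anchor_top (m : Fin n → ℕ∞) (h : anchor n m < n) : m ⟨anchor n m, h⟩ = ⊤ := by
  have hmem : anchor n m ∈ {i : ℕ | n ≤ i ∨ ∃ h : i < n, m ⟨i, h⟩ = ⊤} :=
    Nat.sInf_mem ⟨n, Or.inl le_rfl⟩
  rcases hmem with h' | ⟨h', e⟩
  · omega
  · exact e

lemma anchor_le_of_top (m : Fin n → ℕ∞) (i : Fin n) (h : m i = ⊤) : anchor n m ≤ i :=
  Nat.sInf_le (Or.inr ⟨i.2, by simpa using h⟩)

lemma ne_top_of_lt_anchor (m : Fin n → ℕ∞) (i : Fin n) (h : (i : ℕ) < anchor n m) :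
    m i ≠ ⊤ := fun e => absurd (anchor_le_of_top m i e) (by omega)

lemma anchor_congr {m m' : Fin n → ℕ∞} (h : ∀ i : Fin n, m i = ⊤ ↔ m' i = ⊤) :
    anchor n m = anchor n m' := by
  unfold anchor
  congr 1
  ext i
  simp only [Set.mem_setOf_eq]
  constructor
  · rintro (h' | ⟨hi, e⟩)
    · exact Or.inl h'
    · exact Or.inr ⟨hi, (h _).1 e⟩
  · rintro (h' | ⟨hi, e⟩)
    · exact Or.inl h'
    · exact Or.inr ⟨hi, (h _).2 e⟩

lemma anchor_eq (m : Fin n → ℕ∞) (v : ℕ) (hv : v < n)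
    (h1 : ∀ i : Fin n, (i : ℕ) < v → m i ≠ ⊤) (h2 : m ⟨v, hv⟩ = ⊤) :
    anchor n m = v := by
  have hle : anchor n m ≤ v := anchor_le_of_top m ⟨v, hv⟩ h2
  rcases Nat.lt_or_ge (anchor n m) v with hlt | hge
  · exact absurd (anchor_top m (by omega)) (h1 ⟨anchor n m, by omega⟩ hlt)
  · omega

lemma anchor_eq_n (m : Fin n → ℕ∞) (h : ∀ i : Fin n, m i ≠ ⊤) : anchor n m = n := by
  have hle := anchor_le m
  rcases Nat.lt_or_ge (anchor n m) n with hlt | hge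
  · exact absurd (anchor_top m hlt) (h _)
  · omega

section Psum
variable {M : Type*} [AddCommMonoid M]

lemma Iic_fin_zero (i : Fin n) (h0 : (i : ℕ) = 0) : Finset.Iic i = {i} := by
  ext j
  simp only [Finset.mem_Iic, Finset.mem_singleton, Fin.le_def, Fin.ext_iff]
  omega

lemma Iic_fin_succ (i : Fin n) (h0 : 0 < (i : ℕ)) :
    Finset.Iic i = insert i (Finset.Iic (⟨(i : ℕ) - 1, by omega⟩ : Fin n)) := by
  ext j
  simp only [Finset.mem_Iic, Finset.mem_insert, Fin.le_def, Fin.ext_iff]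
  omega

lemma psum_zero (g : Fin n → M) (i : Fin n) (h0 : (i : ℕ) = 0) :
    ∑ j ∈ Finset.Iic i, g j = g i := by
  rw [Iic_fin_zero i h0, Finset.sum_singleton]

lemma psum_succ (g : Fin n → M) (i : Fin n) (h0 : 0 < (i : ℕ)) :
    ∑ j ∈ Finset.Iic i, g j
      = (∑ j ∈ Finset.Iic (⟨(i : ℕ) - 1, by omega⟩ : Fin n), g j) + g i := by
  rw [Iic_fin_succ i h0, Finset.sum_insert (by simp [Finset.mem_Iic, Fin.le_def]; omega)]
  exact add_comm _ _

end Psum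
end Aux
section Aux2
variable {n : ℕ}

lemma psumE_eq_top_iff (m : Fin n → ℕ∞) (i : Fin n) :
    psumE m i = ⊤ ↔ ∃ j ≤ i, m j = ⊤ := by
  unfold psumE
  rw [ENat.sum_eq_top]
  simp

lemma anchor_psumE (m : Fin n → ℕ∞) : anchor n (psumE m) = anchor n m := by
  apply le_antisymm
  · rcases Nat.lt_or_ge (anchor n m) n with hlt | hge
    · refine anchor_le_of_top _ ⟨anchor n m, hlt⟩ ?_
      exact (psumE_eq_top_iff m _).2 ⟨⟨anchor n m, hlt⟩, le_rfl, anchor_top m hlt⟩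
    · have := anchor_le (psumE m); omega
  · rcases Nat.lt_or_ge (anchor n (psumE m)) n with hlt | hge
    · obtain ⟨j, hj, hjt⟩ := (psumE_eq_top_iff m _).1 (anchor_top (psumE m) hlt)
      have := anchor_le_of_top m j hjt
      have : (j : ℕ) ≤ anchor n (psumE m) := hj
      omega
    · have := anchor_le m; omega

lemma psumE_congr {m m' : Fin n → ℕ∞} (h : Rinf n m m') : psumE m = psumE m' := by
  funext i
  by_cases hi : (i : ℕ) < anchor n m
  · exact Finset.sum_congr rfl fun j hj =>
      h.2 j (lt_of_le_of_lt (Finset.mem_Iic.1 hj : j ≤ i) hi)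
  · have ha : anchor n m < n := by have := i.2; omega
    have h1 := h.1
    have ha' : anchor n m' < n := h1 ▸ ha
    rw [(psumE_eq_top_iff m i).2 ⟨⟨anchor n m, ha⟩, by simp [Fin.le_def]; omega, anchor_top m ha⟩,
      (psumE_eq_top_iff m' i).2 ⟨⟨anchor n m', ha'⟩, by simp [Fin.le_def]; omega,
        anchor_top m' ha'⟩]

lemma psumE_ne_top (m : Fin n → ℕ∞) (i : Fin n) (h : (i : ℕ) < anchor n m) :
    psumE m i ≠ ⊤ :=
  ne_top_of_lt_anchor (psumE m) i (by rw [anchor_psumE]; exact h)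

lemma Rinf_of_psumE_eq {m m' : Fin n → ℕ∞} (h : psumE m = psumE m') : Rinf n m m' := by
  have hanch : anchor n m = anchor n m' := by
    rw [← anchor_psumE m, ← anchor_psumE m', h]
  refine ⟨hanch, fun i hi => ?_⟩
  rcases Nat.eq_zero_or_pos (i : ℕ) with h0 | h0
  · have := psum_zero m i h0
    have := psum_zero m' i h0
    have hfi := congrFun h i
    simp only [psumE] at hfi ⊢
    rw [psum_zero m i h0, psum_zero m' i h0] at hfi
    exact hfi
  · set ip : Fin n := ⟨(i : ℕ) - 1, by omega⟩ with hip
    have hfi := congrFun h i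
    have hfp := congrFun h ip
    simp only [psumE] at hfi hfp
    rw [psum_succ m i h0, psum_succ m' i h0] at hfi
    have hne : psumE m ip ≠ ⊤ := psumE_ne_top m ip (by simp [hip]; omega)
    rw [show (⟨(i:ℕ)-1, by omega⟩ : Fin n) = ip from rfl] at hfi
    have : psumE m ip + m i = psumE m ip + m' i := by
      simpa [psumE, hfp] using hfi
    exact WithTop.add_left_cancel hne this

lemma monotone_psumE (m : Fin n → ℕ∞) : Monotone (psumE m) := fun i j hij =>
  Finset.sum_le_sum_of_subset (Finset.Iic_subset_Iic.2 hij)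

lemma sum_coe_toNat {s : Finset (Fin n)} {m : Fin n → ℕ∞} (h : ∀ j ∈ s, m j ≠ ⊤) :
    ∑ j ∈ s, m j = ((∑ j ∈ s, (m j).toNat : ℕ) : ℕ∞) := by
  rw [Nat.cast_sum]
  exact Finset.sum_congr rfl fun j hj => (ENat.coe_toNat (h j hj)).symm

end Aux2
section Aux3
variable {n : ℕ}

lemma okAdd_resolve {k : Fin n → ℤ} {m : Fin n → ℕ∞} (h : okAdd k m) (i : Fin n)
    (hi : m i ≠ ⊤) : 0 ≤ ((m i).toNat : ℤ) + k i := (h i).resolve_left hi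

lemma psumE_toNat {m : Fin n → ℕ∞} {i : Fin n} (h : psumE m i ≠ ⊤) :
    ((psumE m i).toNat : ℤ) = ∑ j ∈ Finset.Iic i, ((m j).toNat : ℤ) := by
  have hne : ∀ j ∈ Finset.Iic i, m j ≠ ⊤ := by
    intro j hj hj'
    exact h ((psumE_eq_top_iff m i).2 ⟨j, Finset.mem_Iic.1 hj, hj'⟩)
  have := sum_coe_toNat hne
  have h2 : (psumE m i).toNat = ∑ j ∈ Finset.Iic i, (m j).toNat := by
    simp only [psumE]
    rw [this, ENat.toNat_coe]
  rw [h2]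
  push_cast
  rfl

lemma okAdd_psum {k : Fin n → ℤ} {m : Fin n → ℕ∞} (h : okAdd k m) :
    okAdd (psumZ k) (psumE m) := by
  intro i
  by_cases ht : psumE m i = ⊤
  · exact Or.inl ht
  · refine Or.inr ?_
    rw [psumE_toNat ht]
    have : (psumZ k i : ℤ) = ∑ j ∈ Finset.Iic i, k j := rfl
    rw [this, ← Finset.sum_add_distrib]
    refine Finset.sum_nonneg fun j hj => okAdd_resolve h j ?_
    intro hj'
    exact ht ((psumE_eq_top_iff m i).2 ⟨j, Finset.mem_Iic.1 hj, hj'⟩)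

lemma addZE_top (k : ℤ) : addZE k ⊤ = ⊤ := by simp [addZE]

lemma addZE_ne_top (k : ℤ) {m : ℕ∞} (h : m ≠ ⊤) : addZE k m = (((m.toNat : ℤ) + k).toNat : ℕ∞) := by
  simp [addZE, h]

lemma addZv_psum {k : Fin n → ℤ} {m : Fin n → ℕ∞} (h : okAdd k m) :
    addZv (psumZ k) (psumE m) = psumE (addZv k m) := by
  funext i
  by_cases ht : psumE m i = ⊤
  · rw [show addZv (psumZ k) (psumE m) i = addZE (psumZ k i) (psumE m i) from rfl, ht, addZE_top]
    obtain ⟨j, hj, hjt⟩ := (psumE_eq_top_iff m i).1 ht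
    symm
    refine (psumE_eq_top_iff (addZv k m) i).2 ⟨j, hj, ?_⟩
    rw [show addZv k m j = addZE (k j) (m j) from rfl, hjt, addZE_top]
  · have hne : ∀ j ∈ Finset.Iic i, m j ≠ ⊤ := by
      intro j hj hj'
      exact ht ((psumE_eq_top_iff m i).2 ⟨j, Finset.mem_Iic.1 hj, hj'⟩)
    have hL : addZv (psumZ k) (psumE m) i
        = ((((psumE m i).toNat : ℤ) + psumZ k i).toNat : ℕ∞) := addZE_ne_top _ ht
    have hR : psumE (addZv k m) i
        = ((∑ j ∈ Finset.Iic i, (((m j).toNat : ℤ) + k j).toNat : ℕ) : ℕ∞) := by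
      have : ∀ j ∈ Finset.Iic i, addZv k m j = (((((m j).toNat : ℤ) + k j).toNat : ℕ) : ℕ∞) :=
        fun j hj => addZE_ne_top _ (hne j hj)
      calc psumE (addZv k m) i = ∑ j ∈ Finset.Iic i, addZv k m j := rfl
        _ = ∑ j ∈ Finset.Iic i, (((((m j).toNat : ℤ) + k j).toNat : ℕ) : ℕ∞) :=
            Finset.sum_congr rfl this
        _ = _ := by rw [Nat.cast_sum]
    rw [hL, hR]
    congr 1
    have hnn : ∀ j ∈ Finset.Iic i, (0:ℤ) ≤ ((m j).toNat : ℤ) + k j :=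
      fun j hj => okAdd_resolve h j (hne j hj)
    have : (((psumE m i).toNat : ℤ) + psumZ k i) = ∑ j ∈ Finset.Iic i, (((m j).toNat : ℤ) + k j) := by
      rw [psumE_toNat ht, show (psumZ k i : ℤ) = ∑ j ∈ Finset.Iic i, k j from rfl,
        ← Finset.sum_add_distrib]
    have hnn' : (0:ℤ) ≤ ((psumE m i).toNat : ℤ) + psumZ k i := this ▸ Finset.sum_nonneg hnn
    zify
    rw [Int.toNat_of_nonneg hnn', this]
    exact Finset.sum_congr rfl fun j hj => (Int.toNat_of_nonneg (hnn j hj)).symm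

end Aux3
section Aux4
variable {n : ℕ}

/-- Difference map, left inverse of `psumZ`. -/
def dZ (κ : Fin n → ℤ) : Fin n → ℤ :=
  fun i => κ i - (if h : 0 < (i : ℕ) then κ ⟨(i : ℕ) - 1, by omega⟩ else 0)

/-- Difference map on `ℕ∞`, with `⊤` wherever `μ` is `⊤`. -/
def dE (μ : Fin n → ℕ∞) : Fin n → ℕ∞ :=
  fun i => if μ i = ⊤ then ⊤
    else μ i - (if h : 0 < (i : ℕ) then μ ⟨(i : ℕ) - 1, by omega⟩ else 0)

lemma psumZ_dZ (κ : Fin n → ℤ) : psumZ (dZ κ) = κ := by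
  funext i
  induction' ht : (i : ℕ) using Nat.strong_induction_on with t ih generalizing i
  subst ht
  rcases Nat.eq_zero_or_pos (i : ℕ) with h0 | h0
  · show ∑ j ∈ Finset.Iic i, dZ κ j = κ i
    rw [psum_zero (dZ κ) i h0]
    simp [dZ, h0]
  · show ∑ j ∈ Finset.Iic i, dZ κ j = κ i
    rw [psum_succ (dZ κ) i h0]
    set ip : Fin n := ⟨(i : ℕ) - 1, by omega⟩ with hip
    have hih : psumZ (dZ κ) ip = κ ip := ih ip (by simp [hip]; omega) ip rfl
    show psumZ (dZ κ) ip + dZ κ i = κ i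
    rw [hih]
    simp only [dZ, dif_pos h0]
    ring

lemma psumZ_injective : Function.Injective (psumZ (n := n)) := by
  intro k k' h
  funext i
  rcases Nat.eq_zero_or_pos (i : ℕ) with h0 | h0
  · have h1 : psumZ k i = k i := psum_zero k i h0
    have h2 : psumZ k' i = k' i := psum_zero k' i h0
    rw [← h1, ← h2, h]
  · set ip : Fin n := ⟨(i : ℕ) - 1, by omega⟩
    have h1 : psumZ k i = psumZ k ip + k i := psum_succ k i h0
    have h2 : psumZ k' i = psumZ k' ip + k' i := psum_succ k' i h0
    have := congrFun h i
    have hp := congrFun h ip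
    rw [h1, h2, hp] at this
    linarith

lemma dE_top_iff (μ : Fin n → ℕ∞) (i : Fin n) : dE μ i = ⊤ ↔ μ i = ⊤ := by
  unfold dE
  by_cases h : μ i = ⊤
  · simp [h]
  · simp only [h, if_false, iff_false]
    exact fun h' => h (top_le_iff.1 (h' ▸ tsub_le_self))

lemma anchor_dE (μ : Fin n → ℕ∞) : anchor n (dE μ) = anchor n μ :=
  anchor_congr (dE_top_iff μ)

lemma psumE_dE {μ : Fin n → ℕ∞} (hμ : Monotone μ) : psumE (dE μ) = μ := by
  funext i
  induction' ht : (i : ℕ) using Nat.strong_induction_on with t ih generalizing i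
  subst ht
  by_cases htop : μ i = ⊤
  · rw [(psumE_eq_top_iff (dE μ) i).2 ⟨i, le_rfl, (dE_top_iff μ i).2 htop⟩, htop]
  · rcases Nat.eq_zero_or_pos (i : ℕ) with h0 | h0
    · show ∑ j ∈ Finset.Iic i, dE μ j = μ i
      rw [psum_zero (dE μ) i h0]
      simp only [dE, htop, if_false]
      rw [dif_neg (by omega)]
      exact tsub_zero _
    · show ∑ j ∈ Finset.Iic i, dE μ j = μ i
      rw [psum_succ (dE μ) i h0]
      set ip : Fin n := ⟨(i : ℕ) - 1, by omega⟩ with hip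
      have hle : ip ≤ i := by
        rw [hip, Fin.le_def]
        simpa using Nat.sub_le _ _
      have hih : psumE (dE μ) ip = μ ip := ih ip (by simp [hip]; omega) ip rfl
      show psumE (dE μ) ip + dE μ i = μ i
      rw [hih]
      have : dE μ i = μ i - μ ip := by
        simp only [dE, htop, if_false, dif_pos h0]
        rfl
      rw [this]
      exact add_tsub_cancel_of_le (hμ hle)

end Aux4
section Aux5
variable {n : ℕ}

lemma sum_ite_Iic (k : Fin n → ℤ) (a : ℕ) (ha : a < n) :
    ∑ i : Fin n, (if (i : ℕ) ≤ a then k i else 0)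
      = ∑ i ∈ Finset.Iic (⟨a, ha⟩ : Fin n), k i := by
  rw [← Finset.sum_filter]
  congr 1
  ext j
  simp [Fin.le_def]

lemma psumZ_eq_of_zero (k : Fin n → ℤ) (a : ℕ) (ha : a < n)
    (hz : ∀ j : Fin n, a < (j : ℕ) → k j = 0) (j : Fin n) (hj : a ≤ (j : ℕ)) :
    psumZ k j = psumZ k ⟨a, ha⟩ := by
  refine (Finset.sum_subset ?_ ?_).symm
  · intro x hx
    simp only [Finset.mem_Iic, Fin.le_def] at hx ⊢
    omega
  · intro x _ hx
    simp only [Finset.mem_Iic, Fin.le_def] at hx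
    exact hz x (by omega)

lemma phi_mem {k0 : ℤ} {k : Fin n → ℤ} {m : Fin n → ℕ∞} (h : sphCond n k0 k m) :
    (k0, psumZ k, psumE m) ∈ FBig n := by
  refine ⟨monotone_psumE m, okAdd_psum h.1, ?_, ?_⟩
  · show Monotone (addZv (psumZ k) (psumE m))
    rw [addZv_psum h.1]
    exact monotone_psumE _
  · intro ha j hj
    simp only at ha hj ⊢
    rw [anchor_psumE] at ha hj
    obtain ⟨hsum, hz⟩ := h.2 ha
    rw [sum_ite_Iic k _ ha] at hsum
    have h1 : psumZ k j = psumZ k ⟨anchor n m, ha⟩ := psumZ_eq_of_zero k _ ha hz j hj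
    have h2 : psumZ k ⟨anchor n m, ha⟩ = ∑ i ∈ Finset.Iic (⟨anchor n m, ha⟩ : Fin n), k i := rfl
    omega

lemma psi_mem {k0 : ℤ} {κ : Fin n → ℤ} {μ : Fin n → ℕ∞} (hy : (k0, κ, μ) ∈ FBig n) :
    sphCond n k0 (dZ κ) (dE μ) := by
  obtain ⟨hmono, hok, hmono2, h4⟩ := hy
  simp only at hmono hok hmono2 h4
  constructor
  · -- okAdd
    intro i
    by_cases hti : μ i = ⊤
    · exact Or.inl ((dE_top_iff μ i).2 hti)
    · refine Or.inr ?_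
      rcases Nat.eq_zero_or_pos (i : ℕ) with h0 | h0
      · have hdE : dE μ i = μ i := by
          simp only [dE, hti, if_false]
          rw [dif_neg (by omega)]
          exact tsub_zero _
        have hdZ : dZ κ i = κ i := by
          simp only [dZ]
          rw [dif_neg (by omega)]
          ring
        rw [hdE, hdZ]
        exact okAdd_resolve hok i hti
      · set ip : Fin n := ⟨(i : ℕ) - 1, by omega⟩ with hip
        have hle : ip ≤ i := by
          rw [hip, Fin.le_def]
          simpa using Nat.sub_le _ _
        have htp : μ ip ≠ ⊤ := fun e => hti (top_le_iff.1 (e ▸ hmono hle))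
        set A : ℕ := (μ ip).toNat with hA
        set B : ℕ := (μ i).toNat with hB
        have hμip : μ ip = (A : ℕ∞) := (ENat.coe_toNat htp).symm
        have hμi : μ i = (B : ℕ∞) := (ENat.coe_toNat hti).symm
        have hdE : dE μ i = ((B - A : ℕ) : ℕ∞) := by
          simp only [dE, hti, if_false]
          rw [dif_pos h0, ← hip, hμi, hμip, ← ENat.coe_sub]
        have hdZ : dZ κ i = κ i - κ ip := by
          simp only [dZ]
          rw [dif_pos h0]
        have hAB : A ≤ B := by
          have := hmono hle
          rw [hμip, hμi] at this
          exact_mod_cast this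
        have hord := hmono2 hle
        rw [show addZv κ μ ip = addZE (κ ip) (μ ip) from rfl,
          show addZv κ μ i = addZE (κ i) (μ i) from rfl,
          addZE_ne_top _ htp, addZE_ne_top _ hti] at hord
        have hord' : (((A : ℤ) + κ ip).toNat : ℕ) ≤ (((B : ℤ) + κ i).toNat : ℕ) := by
          exact_mod_cast hord
        have hnnA : (0:ℤ) ≤ (A : ℤ) + κ ip := okAdd_resolve hok ip htp
        have hnnB : (0:ℤ) ≤ (B : ℤ) + κ i := okAdd_resolve hok i hti
        rw [hdE, hdZ]
        have : ((B - A : ℕ) : ℕ∞).toNat = B - A := by exact_mod_cast rfl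
        rw [this]
        omega
  · -- anchor conditions
    intro ha
    rw [anchor_dE] at ha
    have hκ : ∀ j : Fin n, anchor n μ ≤ (j : ℕ) → κ j = -k0 := h4 ha
    constructor
    · have hsum : ∑ i : Fin n, (if (i : ℕ) ≤ anchor n (dE μ) then dZ κ i else 0)
          = κ ⟨anchor n μ, ha⟩ := by
        rw [anchor_dE, sum_ite_Iic _ _ ha]
        exact congrFun (psumZ_dZ κ) _
      rw [hsum, hκ ⟨anchor n μ, ha⟩ le_rfl]
      ring
    · intro j hj
      rw [anchor_dE] at hj
      have h0 : 0 < (j : ℕ) := by omega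
      have hjp : κ ⟨(j : ℕ) - 1, by omega⟩ = -k0 := hκ _ (by simpa using by omega)
      have hjv : κ j = -k0 := hκ j (by omega)
      simp only [dZ]
      rw [dif_pos h0, hjv, hjp]
      ring

lemma psumE_psi {μ : Fin n → ℕ∞} (hmono : Monotone μ) : psumE (dE μ) = μ := psumE_dE hmono

end Aux5
section Maps
open Filter Topology

/-- The forward map on representatives. -/
def PhiS (n : ℕ) : SphF n → ↥(FBig n) := fun p =>
  ⟨(p.1.1, psumZ p.1.2.1, psumE p.1.2.2), phi_mem p.2⟩

lemma PhiS_resp (n : ℕ) (p q : SphF n) (h : (sphSetoid n).r p q) : PhiS n p = PhiS n q := by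
  obtain ⟨h1, h2, h3⟩ := h
  apply Subtype.ext
  show (_, _, _) = (_, _, _)
  rw [h1, h2, psumE_congr h3]

/-- The induced map on the quotient. -/
def PhiQ (n : ℕ) : Quotient (sphSetoid n) → ↥(FBig n) :=
  Quotient.lift (PhiS n) (PhiS_resp n)

/-- The section of the forward map. -/
def psiS (n : ℕ) : ↥(FBig n) → SphF n := fun y =>
  ⟨(y.1.1, dZ y.1.2.1, dE y.1.2.2), psi_mem y.2⟩

lemma PhiS_psiS (n : ℕ) (y : ↥(FBig n)) : PhiS n (psiS n y) = y := by
  apply Subtype.ext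
  show (y.1.1, psumZ (dZ y.1.2.1), psumE (dE y.1.2.2)) = y.1
  rw [psumZ_dZ, psumE_dE y.2.1]

lemma PhiQ_bijective (n : ℕ) : Function.Bijective (PhiQ n) := by
  constructor
  · intro x y
    refine Quotient.inductionOn₂ x y fun p q h => ?_
    have h' : (p.1.1, psumZ p.1.2.1, psumE p.1.2.2) = (q.1.1, psumZ q.1.2.1, psumE q.1.2.2) :=
      Subtype.ext_iff.1 h
    have e1 : p.1.1 = q.1.1 := congrArg (fun z => z.1) h'
    have e2 : psumZ p.1.2.1 = psumZ q.1.2.1 := congrArg (fun z => z.2.1) h'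
    have e3 : psumE p.1.2.2 = psumE q.1.2.2 := congrArg (fun z => z.2.2) h'
    exact Quotient.sound ⟨e1, psumZ_injective e2, Rinf_of_psumE_eq e3⟩
  · intro y
    exact ⟨Quotient.mk (sphSetoid n) (psiS n y), PhiS_psiS n y⟩

lemma continuous_PhiS (n : ℕ) : Continuous (PhiS n) := by
  have cval : Continuous (Subtype.val : SphF n → ℤ × (Fin n → ℤ) × (Fin n → ℕ∞)) :=
    continuous_subtype_val
  have c0 : Continuous fun p : SphF n => p.1.1 := continuous_fst.comp cval
  have ck : Continuous fun p : SphF n => p.1.2.1 :=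
    continuous_fst.comp (continuous_snd.comp cval)
  have cm : Continuous fun p : SphF n => p.1.2.2 :=
    continuous_snd.comp (continuous_snd.comp cval)
  refine Continuous.subtype_mk (c0.prodMk (Continuous.prodMk ?_ ?_)) _
  · exact continuous_pi fun i => continuous_finset_sum _ fun j _ => (continuous_apply j).comp ck
  · exact continuous_pi fun i => continuous_finset_sum _ fun j _ => (continuous_apply j).comp cm

lemma continuous_PhiQ (n : ℕ) : Continuous (PhiQ n) :=
  Continuous.quotient_lift (continuous_PhiS n) _

end Maps
section InvCont
open Filter Topology

lemma continuous_inv (n : ℕ) :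
    Continuous fun y : ↥(FBig n) => Quotient.mk (sphSetoid n) (psiS n y) := by
  rw [continuous_iff_continuousAt]
  intro y
  rw [ContinuousAt, tendsto_nhds]
  intro U hUopen hfy
  obtain ⟨Oamb, hOopen, hOeq⟩ := isOpen_induced_iff.1 (hUopen.preimage
    (continuous_quot_mk : Continuous (Quotient.mk (sphSetoid n))))
  obtain ⟨⟨k0, κ, μ⟩, hy⟩ := y
  rw [nhds_induced, Filter.mem_comap]
  by_cases han : anchor n μ < n
  case neg =>
    refine ⟨{k0} ×ˢ ({κ} ×ˢ Set.univ.pi fun i => {μ i}), ?_, ?_⟩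
    · have hane := anchor_le μ
      have hfin : ∀ i : Fin n, μ i ≠ ⊤ := fun i =>
        ne_top_of_lt_anchor μ i (by have := i.2; omega)
      refine prod_mem_nhds ((isOpen_discrete _).mem_nhds rfl)
        (prod_mem_nhds ((isOpen_discrete _).mem_nhds rfl)
          (set_pi_mem_nhds Set.finite_univ fun i _ => ?_))
      rw [ENat.nhds_eq_pure (hfin i)]
      exact mem_pure.2 rfl
    · rintro ⟨⟨k0', κ', μ'⟩, hy'⟩ hz
      obtain ⟨h1, h2, h3⟩ := hz
      rw [Set.mem_singleton_iff] at h1 h2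
      have hμeq : μ' = μ := funext fun i => h3 i (Set.mem_univ i)
      subst h2; subst hμeq
      have hk : k0' = k0 := h1
      subst hk
      exact hfy
  case pos =>
    set a := anchor n μ with ha
    have hμtop : μ ⟨a, han⟩ = ⊤ := anchor_top μ han
    have hμfin : ∀ i : Fin n, (i : ℕ) < a → μ i ≠ ⊤ := fun i hi => ne_top_of_lt_anchor μ i hi
    have hψ : sphCond n k0 (dZ κ) (dE μ) := psi_mem hy
    set D : Set (Fin n → ℕ∞) :=
      Set.univ.pi fun i : Fin n => if (i : ℕ) < a then {dE μ i} else Set.univ with hD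
    have hDcomp : IsCompact D := by
      apply IsClosed.isCompact
      refine isClosed_set_pi fun i _ => ?_
      split
      · exact isClosed_singleton
      · exact isClosed_univ
    set g : ℕ∞ × (Fin n → ℕ∞) → ℤ × (Fin n → ℤ) × (Fin n → ℕ∞) :=
      fun td => (k0, dZ κ, Function.update td.2 ⟨a, han⟩ td.1) with hgdef
    have hgm : Continuous fun td : ℕ∞ × (Fin n → ℕ∞) =>
        Function.update td.2 (⟨a, han⟩ : Fin n) td.1 := by
      apply continuous_pi
      intro j
      by_cases hj : j = ⟨a, han⟩
      · subst hj
        simp only [Function.update_self]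
        exact continuous_fst
      · simp only [Function.update_of_ne hj]
        exact (continuous_apply j).comp continuous_snd
    have hg : Continuous g := continuous_const.prodMk (continuous_const.prodMk hgm)
    have hadE : anchor n (dE μ) = a := anchor_dE μ
    obtain ⟨hsum, hzero⟩ := hψ.2 (by rw [hadE]; exact han)
    have hsub' : ({(⊤ : ℕ∞)} ×ˢ D) ⊆ g ⁻¹' Oamb := by
      rintro ⟨t, d⟩ ⟨ht, hd⟩
      rw [Set.mem_singleton_iff] at ht
      subst ht
      have hdmem : ∀ i : Fin n, (i : ℕ) < a → d i = dE μ i := by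
        intro i hi
        have := hd i (Set.mem_univ i)
        dsimp only at this
        rwa [if_pos hi, Set.mem_singleton_iff] at this
      set mst : Fin n → ℕ∞ := Function.update d ⟨a, han⟩ ⊤ with hmst
      have hms1 : ∀ i : Fin n, (i : ℕ) < a → mst i = dE μ i := by
        intro i hi
        rw [hmst, Function.update_of_ne (by
          intro e
          rw [e] at hi
          simp at hi), hdmem i hi]
      have hms2 : mst ⟨a, han⟩ = ⊤ := Function.update_self _ _ _
      have hanc : anchor n mst = a := by
        refine anchor_eq mst a han (fun i hi => ?_) hms2
        rw [hms1 i hi]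
        exact fun e => hμfin i hi ((dE_top_iff μ i).1 e)
      have hz : sphCond n k0 (dZ κ) mst := by
        constructor
        · intro i
          rcases lt_trichotomy ((i : ℕ)) a with hlt | heq | hgt
          · rw [hms1 i hlt]
            exact hψ.1 i
          · left
            have : i = ⟨a, han⟩ := Fin.ext heq
            rw [this]
            exact hms2
          · right
            rw [hzero i (by rw [hadE]; exact hgt)]
            simp
        · intro _
          rw [hanc]
          rw [hadE] at hsum
          refine ⟨hsum, fun j hj => hzero j (by rw [hadE]; exact hj)⟩
      have hRinf : Rinf n mst (dE μ) := by
        refine ⟨hanc.trans hadE.symm, fun i hi => ?_⟩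
        rw [hanc] at hi
        exact hms1 i hi
      have hequiv : (sphSetoid n).r ⟨(k0, dZ κ, mst), hz⟩ (psiS n ⟨(k0, κ, μ), hy⟩) :=
        ⟨rfl, rfl, hRinf⟩
      have hmem : (⟨(k0, dZ κ, mst), hz⟩ : SphF n) ∈ Quotient.mk (sphSetoid n) ⁻¹' U := by
        show Quotient.mk (sphSetoid n) _ ∈ U
        rw [Quotient.sound hequiv]
        exact hfy
      exact (Set.ext_iff.1 hOeq ⟨(k0, dZ κ, mst), hz⟩).2 hmem
    obtain ⟨V1, V2, hV1o, hV2o, hV1m, hV2m, hVsub⟩ :=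
      generalized_tube_lemma isCompact_singleton hDcomp (hOopen.preimage hg) hsub'
    have htopV1 : (⊤ : ℕ∞) ∈ V1 := hV1m rfl
    obtain ⟨l, hl, hIoi⟩ : ∃ l : ℕ∞, l < ⊤ ∧ Set.Ioi l ⊆ V1 := by
      have := nhds_top_basis.mem_iff.1 (hV1o.mem_nhds htopV1)
      simpa using this
    set c : ℕ∞ := if h : 0 < a then μ ⟨a - 1, by omega⟩ else 0 with hc
    have hcne : c ≠ ⊤ := by
      rw [hc]
      split
      next h0 => exact hμfin ⟨a - 1, by omega⟩ (by simp; omega)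
      next => simp
    refine ⟨{k0} ×ˢ ({κ} ×ˢ Set.univ.pi fun i : Fin n =>
      if (i : ℕ) < a then {μ i} else if (i : ℕ) = a then Set.Ioi (l + c) else Set.univ), ?_, ?_⟩
    · refine prod_mem_nhds ((isOpen_discrete _).mem_nhds rfl)
        (prod_mem_nhds ((isOpen_discrete _).mem_nhds rfl)
          (set_pi_mem_nhds Set.finite_univ fun i _ => ?_))
      rcases lt_trichotomy ((i : ℕ)) a with hlt | heq | hgt
      · rw [if_pos hlt, ENat.nhds_eq_pure (hμfin i hlt)]
        exact mem_pure.2 rfl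
      · rw [if_neg (by omega), if_pos heq]
        refine isOpen_Ioi.mem_nhds ?_
        have hia : μ i = ⊤ := by
          rw [show i = ⟨a, han⟩ from Fin.ext heq]
          exact hμtop
        rw [Set.mem_Ioi, hia]
        exact WithTop.add_lt_top.2 ⟨hl, lt_top_iff_ne_top.2 hcne⟩
      · rw [if_neg (by omega), if_neg (by omega)]
        exact Filter.univ_mem
    · intro y' hz
      obtain ⟨h1, h2, h3⟩ := hz
      rw [Set.mem_singleton_iff] at h1 h2
      set μ' := (y' : ℤ × (Fin n → ℤ) × (Fin n → ℕ∞)).2.2 with hμ'def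
      have hμ'lt : ∀ i : Fin n, (i : ℕ) < a → μ' i = μ i := by
        intro i hi
        have := h3 i (Set.mem_univ i)
        dsimp only at this
        rwa [if_pos hi, Set.mem_singleton_iff] at this
      have hμ'a : l + c < μ' ⟨a, han⟩ := by
        have := h3 ⟨a, han⟩ (Set.mem_univ _)
        dsimp only at this
        rwa [if_neg (by simp), if_pos (by simp), Set.mem_Ioi] at this
      have hdE' : ∀ i : Fin n, (i : ℕ) < a → dE μ' i = dE μ i := by
        intro i hi
        have ht : μ i ≠ ⊤ := hμfin i hi
        simp only [dE, hμ'lt i hi, ht, if_false]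
        congr 1
        by_cases h0 : 0 < (i : ℕ)
        · rw [dif_pos h0, dif_pos h0, hμ'lt _ (by simp; omega)]
        · rw [dif_neg h0, dif_neg h0]
      have hdEa : dE μ' ⟨a, han⟩ ∈ Set.Ioi l := by
        by_cases ht : μ' ⟨a, han⟩ = ⊤
        · simp only [dE, ht, if_true, Set.mem_Ioi]
          exact hl
        · have hde : dE μ' ⟨a, han⟩ = μ' ⟨a, han⟩ - c := by
            simp only [dE, ht, if_false]
            congr 1
            rw [hc]
            by_cases h0 : 0 < a
            · rw [dif_pos (show 0 < ((⟨a, han⟩ : Fin n) : ℕ) from h0), dif_pos h0]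
              exact hμ'lt _ (by simp; omega)
            · rw [dif_neg (show ¬ 0 < ((⟨a, han⟩ : Fin n) : ℕ) from h0), dif_neg h0]
          rw [Set.mem_Ioi, hde]
          exact lt_tsub_iff_right.2 hμ'a
      have hdED : dE μ' ∈ D := by
        rw [hD]
        intro i _
        dsimp only
        by_cases hi : (i : ℕ) < a
        · rw [if_pos hi]
          exact hdE' i hi
        · rw [if_neg hi]
          trivial
      have hg' : g (dE μ' ⟨a, han⟩, dE μ') ∈ Oamb := hVsub ⟨hIoi hdEa, hV2m hdED⟩
      have hupdate : Function.update (dE μ') (⟨a, han⟩ : Fin n) (dE μ' ⟨a, han⟩) = dE μ' :=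
        Function.update_eq_self _ _
      show Quotient.mk (sphSetoid n) (psiS n y') ∈ U
      have hval : (psiS n y').1 = g (dE μ' ⟨a, han⟩, dE μ') := by
        show ((y' : ℤ × (Fin n → ℤ) × (Fin n → ℕ∞)).1,
          dZ (y' : ℤ × (Fin n → ℤ) × (Fin n → ℕ∞)).2.1, dE μ') = _
        rw [hgdef]
        dsimp only
        rw [hupdate, h1, h2]
      have hmem : psiS n y' ∈ Subtype.val ⁻¹' Oamb := by
        show (psiS n y').1 ∈ Oamb
        rw [hval]
        exact hg'
      exact (Set.ext_iff.1 hOeq (psiS n y')).1 hmem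

end InvCont

/-- For `n ≥ 1`, the map `[(k₀,k,m)] ↦ (k₀, f(k), f(m))` (with `f` the
partial-sums map) is a well-defined homeomorphism `𝔉ₙ¹ = 𝔉̃ₙ¹/∼ → ℱ¹` preserving the
groupoid structure: it sends units to units and compositions to compositions. -/
theorem stmt_17 (n : ℕ) (hn : 1 ≤ n) :
    ∃ h : Quotient (sphSetoid n) ≃ₜ ↥(FBig n),
      -- the homeomorphism is induced by `(k₀,k,m) ↦ (k₀, f(k), f(m))`
      (∀ p : SphF n, (h (Quotient.mk (sphSetoid n) p)).1
          = (p.1.1, psumZ p.1.2.1, psumE p.1.2.2)) ∧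
      -- it sends units `(0,0,[m])` to units `(0,0,f(m))`
      (∀ (m : Fin n → ℕ∞) (h0 : sphCond n 0 (fun _ => 0) m),
        (h (Quotient.mk (sphSetoid n) ⟨(0, fun _ => 0, m), h0⟩)).1
          = (0, fun _ => 0, psumE m)) ∧
      -- it sends the composition `(k₀',k',k+m)·(k₀,k,m) = (k₀+k₀', k+k', m)` of `𝔉ₙ¹` to
      -- the composition `(k₀',κ',κ+μ)·(k₀,κ,μ) = (k₀+k₀', κ+κ', μ)` of `ℱ¹`
      (∀ (k0 k0' : ℤ) (k k' : Fin n → ℤ) (m : Fin n → ℕ∞)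
        (h1 : sphCond n k0 k m) (h2 : sphCond n k0' k' (addZv k m))
        (h3 : sphCond n (k0 + k0') (fun i => k i + k' i) m),
        (h (Quotient.mk (sphSetoid n) ⟨(k0 + k0', fun i => k i + k' i, m), h3⟩)).1
          = ((h (Quotient.mk (sphSetoid n) ⟨(k0, k, m), h1⟩)).1.1
               + (h (Quotient.mk (sphSetoid n) ⟨(k0', k', addZv k m), h2⟩)).1.1,
             fun i => (h (Quotient.mk (sphSetoid n) ⟨(k0, k, m), h1⟩)).1.2.1 i
               + (h (Quotient.mk (sphSetoid n) ⟨(k0', k', addZv k m), h2⟩)).1.2.1 i,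
             (h (Quotient.mk (sphSetoid n) ⟨(k0, k, m), h1⟩)).1.2.2)) := by
  classical
  have hbij := PhiQ_bijective n
  let e : Quotient (sphSetoid n) ≃ ↥(FBig n) := Equiv.ofBijective (PhiQ n) hbij
  have hsymm : ∀ y, e.symm y = Quotient.mk (sphSetoid n) (psiS n y) := by
    intro y
    apply e.injective
    rw [Equiv.apply_symm_apply]
    exact (PhiS_psiS n y).symm
  refine ⟨{ toEquiv := e
            continuous_toFun := continuous_PhiQ n
            continuous_invFun := by
              have heq : (⇑e.symm : ↥(FBig n) → Quotient (sphSetoid n))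
                  = fun y => Quotient.mk (sphSetoid n) (psiS n y) := funext hsymm
              have hc := continuous_inv n
              rw [← heq] at hc
              exact hc }, ?_, ?_, ?_⟩
  · intro p
    rfl
  · intro m h0
    show ((0 : ℤ), psumZ (fun _ => (0 : ℤ)), psumE m) = ((0 : ℤ), fun _ => (0 : ℤ), psumE m)
    refine Prod.ext rfl (Prod.ext ?_ rfl)
    funext i
    show (∑ _j ∈ Finset.Iic i, (0 : ℤ)) = 0
    exact Finset.sum_const_zero
  · intro k0 k0' k k' m h1 h2 h3
    show ((k0 + k0' : ℤ), psumZ (fun i => k i + k' i), psumE m)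
      = ((k0 + k0' : ℤ), fun i => psumZ k i + psumZ k' i, psumE m)
    refine Prod.ext rfl (Prod.ext ?_ rfl)
    funext i
    show (∑ j ∈ Finset.Iic i, (k j + k' j))
      = (∑ j ∈ Finset.Iic i, k j) + ∑ j ∈ Finset.Iic i, k' j
    exact Finset.sum_add_distrib
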